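/- Let n ≥ 1, let 0 ≤ k ≤ n, set p = k/n, let ρA and ρB be density matrices on ℂ^d, and let ρC = p·ρA + (1−p)·ρB. Let P be a positive semidefinite matrix indexed by functions Fin n → Fin d that is permutation invariant, i.e. P (x ∘ π) (y ∘ π) = P x y for every permutation π of Fin n and all x, y. Then Re Tr(P · X) ≤ (n+1) · Re Tr(P · ρC^⊗n), where X is the matrix with entries X x y = (∏_{i : (i:ℕ) < k} ρA (x i) (y i)) · (∏_{i : (i:ℕ) ≥ k} ρB (x i) (y i)). -/

import Mathlib

namespace TracePermAux

open ComplexOrder Finset Matrix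

open Finset

lemma step_up {n k j : ℕ} (hk : k ≤ n) (hj : j < k) :
    n.choose j * k ^ j * (n - k) ^ (n - j) ≤
    n.choose (j+1) * k ^ (j+1) * (n - k) ^ (n - (j+1)) := by
  have h1 : n.choose j * (n - k) ≤ n.choose (j+1) * k := by
    have hid : n.choose (j+1) * (j+1) = n.choose j * (n - j) := Nat.choose_succ_right_eq n j
    have h2 : (n - k) * (j+1) ≤ (n - j) * k :=
      le_trans (Nat.mul_le_mul_left _ hj) (Nat.mul_le_mul_right _ (Nat.sub_le_sub_left hj.le n))
    have : n.choose j * (n - k) * (j+1) ≤ n.choose (j+1) * k * (j+1) := by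
      calc n.choose j * (n - k) * (j+1) = n.choose j * ((n - k) * (j+1)) := by ring
        _ ≤ n.choose j * ((n - j) * k) := Nat.mul_le_mul_left _ h2
        _ = n.choose (j+1) * (j+1) * k := by rw [hid]; ring
        _ = n.choose (j+1) * k * (j+1) := by ring
    exact Nat.le_of_mul_le_mul_right this (Nat.succ_pos j)
  have hnj : n - j = (n - (j+1)) + 1 := by omega
  calc n.choose j * k ^ j * (n - k) ^ (n - j)
      = (n.choose j * (n - k)) * (k ^ j * (n - k) ^ (n - (j+1))) := by rw [hnj, pow_succ]; ring
    _ ≤ (n.choose (j+1) * k) * (k ^ j * (n - k) ^ (n - (j+1))) := Nat.mul_le_mul_right _ h1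
    _ = n.choose (j+1) * k ^ (j+1) * (n - k) ^ (n - (j+1)) := by rw [pow_succ]; ring

lemma step_down {n k j : ℕ} (hk : k ≤ j) (hj : j < n) :
    n.choose (j+1) * k ^ (j+1) * (n - k) ^ (n - (j+1)) ≤
    n.choose j * k ^ j * (n - k) ^ (n - j) := by
  have h1 : n.choose (j+1) * k ≤ n.choose j * (n - k) := by
    have hid : n.choose (j+1) * (j+1) = n.choose j * (n - j) := Nat.choose_succ_right_eq n j
    have h2 : (n - j) * k ≤ (n - k) * (j+1) :=
      le_trans (Nat.mul_le_mul_left _ (Nat.lt_succ_of_le hk).le)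
        (Nat.mul_le_mul_right _ (Nat.sub_le_sub_left hk n))
    have : n.choose (j+1) * k * (j+1) ≤ n.choose j * (n - k) * (j+1) := by
      calc n.choose (j+1) * k * (j+1) = n.choose (j+1) * (j+1) * k := by ring
        _ = n.choose j * ((n - j) * k) := by rw [hid]; ring
        _ ≤ n.choose j * ((n - k) * (j+1)) := Nat.mul_le_mul_left _ h2
        _ = n.choose j * (n - k) * (j+1) := by ring
    exact Nat.le_of_mul_le_mul_right this (Nat.succ_pos j)
  have hnj : n - j = (n - (j+1)) + 1 := by omega
  calc n.choose (j+1) * k ^ (j+1) * (n - k) ^ (n - (j+1))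
      = (n.choose (j+1) * k) * (k ^ j * (n - k) ^ (n - (j+1))) := by rw [pow_succ]; ring
    _ ≤ (n.choose j * (n - k)) * (k ^ j * (n - k) ^ (n - (j+1))) := Nat.mul_le_mul_right _ h1
    _ = n.choose j * k ^ j * (n - k) ^ (n - j) := by rw [hnj, pow_succ]; ring

lemma nat_term_le {n k : ℕ} (hk : k ≤ n) (j : ℕ) :
    n.choose j * k ^ j * (n - k) ^ (n - j) ≤ n.choose k * k ^ k * (n - k) ^ (n - k) := by
  rcases le_total j k with h | h
  · -- increasing part
    have key : ∀ m : ℕ, n.choose (k - m) * k ^ (k - m) * (n - k) ^ (n - (k - m)) ≤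
        n.choose k * k ^ k * (n - k) ^ (n - k) := by
      intro m
      induction m with
      | zero => simp
      | succ m ih =>
        rcases le_or_gt (m+1) k with hm | hm
        · have h1 : k - (m+1) + 1 = k - m := by omega
          have h2 : k - (m+1) < k := by omega
          calc n.choose (k - (m+1)) * k ^ (k - (m+1)) * (n - k) ^ (n - (k - (m+1)))
              ≤ n.choose (k - (m+1) + 1) * k ^ (k - (m+1) + 1) *
                  (n - k) ^ (n - (k - (m+1) + 1)) := step_up hk h2
            _ = n.choose (k - m) * k ^ (k - m) * (n - k) ^ (n - (k - m)) := by rw [h1]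
            _ ≤ _ := ih
        · have : k - (m+1) = k - m := by omega
          rw [this]; exact ih
    have := key (k - j)
    rwa [Nat.sub_sub_self h] at this
  · -- decreasing part
    induction j, h using Nat.le_induction with
    | base => exact le_refl _
    | succ j hj ih =>
      rcases lt_or_ge j n with hjn | hjn
      · exact le_trans (step_down (by omega) hjn) ih
      · have : n.choose (j+1) = 0 := Nat.choose_eq_zero_of_lt (by omega)
        simp [this]

lemma real_key {n k : ℕ} (hn : 1 ≤ n) (hk : k ≤ n) :
    1 ≤ ((n : ℝ) + 1) * (n.choose k * ((k / n : ℝ) ^ k * (1 - k / n) ^ (n - k))) := by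
  set p : ℝ := k / n with hp
  set q : ℝ := 1 - k / n with hq
  have hn0 : (0:ℝ) < n := by exact_mod_cast hn
  have hpq : p + q = 1 := by rw [hp, hq]; ring
  have hqeq : q = ((n - k : ℕ) : ℝ) / n := by
    rw [hq, Nat.cast_sub hk]; field_simp
  have hterm : ∀ j ≤ n, (n.choose j : ℝ) * (p ^ j * q ^ (n - j)) =
      ((n.choose j * k ^ j * (n - k) ^ (n - j) : ℕ) : ℝ) / (n : ℝ) ^ n := by
    intro j hj
    rw [hqeq, hp]
    push_cast
    rw [div_pow, div_pow]
    have : (n:ℝ) ^ j * (n:ℝ) ^ (n - j) = (n:ℝ) ^ n := by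
      rw [← pow_add]; congr 1; omega
    field_simp
    ring_nf
    rw [← this]
    ring
  have hle : ∀ j ∈ range (n + 1), (n.choose j : ℝ) * (p ^ j * q ^ (n - j)) ≤
      (n.choose k : ℝ) * (p ^ k * q ^ (n - k)) := by
    intro j hjm
    have hj : j ≤ n := by simpa using Nat.lt_succ_iff.mp (mem_range.mp hjm)
    rw [hterm j hj, hterm k hk]
    have hnum : ((n.choose j * k ^ j * (n - k) ^ (n - j) : ℕ) : ℝ) ≤
        ((n.choose k * k ^ k * (n - k) ^ (n - k) : ℕ) : ℝ) := Nat.cast_le.mpr (nat_term_le hk j)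
    exact div_le_div_of_nonneg_right hnum (by positivity) |>.trans_eq rfl
  have hsum : (1:ℝ) = ∑ j ∈ range (n+1), (n.choose j : ℝ) * (p ^ j * q ^ (n - j)) := by
    have := add_pow p q n
    rw [hpq, one_pow] at this
    rw [this]
    refine sum_congr rfl fun j _ => by ring
  have : (1:ℝ) ≤ (n + 1) * ((n.choose k : ℝ) * (p ^ k * q ^ (n - k))) := by
    calc (1:ℝ) = ∑ j ∈ range (n+1), (n.choose j : ℝ) * (p ^ j * q ^ (n - j)) := hsum
      _
        ≤ ∑ _j ∈ range (n+1), (n.choose k : ℝ) * (p ^ k * q ^ (n - k)) := sum_le_sum hle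
      _ = (n + 1) * ((n.choose k : ℝ) * (p ^ k * q ^ (n - k))) := by
          rw [sum_const, card_range]; push_cast; ring
  exact this


open scoped MatrixOrder in
lemma psd_iff_eq_ct_mul_self {m : Type*} [Fintype m] [DecidableEq m] {A : Matrix m m ℂ} :
    A.PosSemidef ↔ ∃ B : Matrix m m ℂ, A = Bᴴ * B := by
  constructor
  · intro hA
    obtain ⟨B, rfl⟩ := CStarAlgebra.nonneg_iff_eq_star_mul_self.mp hA.nonneg
    exact ⟨B, rfl⟩
  · rintro ⟨B, rfl⟩
    exact Matrix.posSemidef_conjTranspose_mul_self B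

lemma tensor_posSemidef {d n : ℕ} (A : Fin n → Matrix (Fin d) (Fin d) ℂ)
    (hA : ∀ i, (A i).PosSemidef) :
    (Matrix.of fun x y : Fin n → Fin d => ∏ i, A i (x i) (y i)).PosSemidef := by
  choose B hB using fun i => psd_iff_eq_ct_mul_self.mp (hA i)
  rw [psd_iff_eq_ct_mul_self]
  refine ⟨Matrix.of fun x y : Fin n → Fin d => ∏ i, B i (x i) (y i), ?_⟩
  ext x y
  simp only [Matrix.of_apply, Matrix.mul_apply, Matrix.conjTranspose_apply]
  have : ∀ i, A i (x i) (y i) = ∑ w : Fin d, star (B i w (x i)) * B i w (y i) := by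
    intro i
    rw [hB i]
    simp [Matrix.mul_apply, Matrix.conjTranspose_apply]
  simp_rw [this]
  rw [Finset.prod_univ_sum]
  rw [Fintype.piFinset_univ]
  refine Finset.sum_congr rfl fun z _ => ?_
  rw [star_prod, ← Finset.prod_mul_distrib]

lemma trace_mul_psd_nonneg {m : Type*} [Fintype m] [DecidableEq m]
    {P Q : Matrix m m ℂ} (hP : P.PosSemidef) (hQ : Q.PosSemidef) :
    0 ≤ (P * Q).trace.re ∧ (P * Q).trace.im = 0 := by
  obtain ⟨B, rfl⟩ := psd_iff_eq_ct_mul_self.mp hQ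
  rw [← Matrix.mul_assoc, Matrix.trace_mul_comm]
  have h : (B * P * Bᴴ).PosSemidef := by
    have := hP.mul_mul_conjTranspose_same B
    simpa [Matrix.mul_assoc] using this
  have hd : ∀ i, 0 ≤ (B * P * Bᴴ) i i := fun i => by
    exact h.diag_nonneg
  have : (0:ℂ) ≤ (B * (P * Bᴴ)).trace := by
    rw [← Matrix.mul_assoc]
    unfold Matrix.trace
    exact Finset.sum_nonneg fun i _ => hd i
  rw [Complex.le_def] at this
  simp only [Complex.zero_re, Complex.zero_im] at this
  exact ⟨this.1, this.2.symm⟩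

lemma trace_perm {d n : ℕ} (ρA ρB : Matrix (Fin d) (Fin d) ℂ)
    (P : Matrix (Fin n → Fin d) (Fin n → Fin d) ℂ)
    (hPinv : ∀ (π : Equiv.Perm (Fin n)) (x y : Fin n → Fin d), P (x ∘ π) (y ∘ π) = P x y)
    (S T : Finset (Fin n)) (hST : S.card = T.card) :
    (P * Matrix.of fun x y : Fin n → Fin d =>
        ∏ i, (if i ∈ S then ρA else ρB) (x i) (y i)).trace
    = (P * Matrix.of fun x y : Fin n → Fin d =>
        ∏ i, (if i ∈ T then ρA else ρB) (x i) (y i)).trace := by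
  classical
  let e1 : {x : Fin n // x ∈ S} ≃ {x : Fin n // x ∈ T} :=
    Fintype.equivOfCardEq (by simp [hST])
  let e2 : {x : Fin n // ¬ x ∈ S} ≃ {x : Fin n // ¬ x ∈ T} :=
    Fintype.equivOfCardEq (by
      rw [Fintype.card_subtype_compl, Fintype.card_subtype_compl]
      simp [hST])
  let π : Equiv.Perm (Fin n) :=
    ((Equiv.sumCompl (· ∈ S)).symm.trans (e1.sumCongr e2)).trans (Equiv.sumCompl (· ∈ T))
  have hπ : ∀ i, (π i ∈ T) = (i ∈ S) := by
    intro i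
    by_cases hi : i ∈ S
    · simp only [π, Equiv.trans_apply, Equiv.sumCompl_symm_apply_of_pos hi,
        Equiv.sumCongr_apply, Sum.map_inl, Equiv.sumCompl_apply_inl]
      simp [hi, (e1 ⟨i, hi⟩).2]
    · simp only [π, Equiv.trans_apply, Equiv.sumCompl_symm_apply_of_neg hi,
        Equiv.sumCongr_apply, Sum.map_inr, Equiv.sumCompl_apply_inr]
      simp [hi, (e2 ⟨i, hi⟩).2]
  have hM : ∀ x y : Fin n → Fin d,
      (∏ i, (if i ∈ S then ρA else ρB) (y i) (x i)) =
      ∏ i, (if i ∈ T then ρA else ρB) ((y ∘ π.symm) i) ((x ∘ π.symm) i) := by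
    intro x y
    rw [← Equiv.prod_comp π
      (fun i => (if i ∈ T then ρA else ρB) ((y ∘ π.symm) i) ((x ∘ π.symm) i))]
    refine Finset.prod_congr rfl fun i _ => ?_
    simp [hπ i]
  have tr_eq : ∀ M N : Matrix (Fin n → Fin d) (Fin n → Fin d) ℂ,
      (M * N).trace = ∑ x : Fin n → Fin d, ∑ y : Fin n → Fin d, M x y * N y x := by
    intro M N
    simp [Matrix.trace, Matrix.diag, Matrix.mul_apply]
  rw [tr_eq, tr_eq]
  simp only [Matrix.of_apply]
  let eπ : (Fin n → Fin d) ≃ (Fin n → Fin d) := Equiv.arrowCongr π (Equiv.refl _)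
  rw [← Equiv.sum_comp eπ (fun x => ∑ y : Fin n → Fin d,
    P x y * ∏ i, (if i ∈ T then ρA else ρB) (y i) (x i))]
  refine Finset.sum_congr rfl fun x _ => ?_
  rw [← Equiv.sum_comp eπ (fun y =>
    P (eπ x) y * ∏ i, (if i ∈ T then ρA else ρB) (y i) ((eπ x) i))]
  refine Finset.sum_congr rfl fun y _ => ?_
  have hex : ∀ z : Fin n → Fin d, eπ z = z ∘ π.symm := by
    intro z; funext i; simp [eπ, Equiv.arrowCongr]
  rw [hex, hex, hPinv π.symm x y, hM x y]

end TracePermAux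

open TracePermAux in
open ComplexOrder Finset in
/-- For `1 ≤ n`, `k ≤ n`, `p = k/n`, density matrices `ρA, ρB` on `ℂ^d`,
`ρC = p·ρA + (1-p)·ρB`, and a positive semidefinite, permutation-invariant
matrix `P` indexed by `Fin n → Fin d`, one has
`Re Tr(P · (ρA^⊗k ⊗ ρB^⊗(n−k))) ≤ (n+1) · Re Tr(P · ρC^⊗n)`. -/
theorem trace_perm_invariant_le {d n k : ℕ} (hn : 1 ≤ n) (hk : k ≤ n)
    (ρA ρB : Matrix (Fin d) (Fin d) ℂ)
    (hρA : ρA.PosSemidef) (hρAtr : ρA.trace = 1)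
    (hρB : ρB.PosSemidef) (hρBtr : ρB.trace = 1)
    (P : Matrix (Fin n → Fin d) (Fin n → Fin d) ℂ)
    (hP : P.PosSemidef)
    (hPinv : ∀ (π : Equiv.Perm (Fin n)) (x y : Fin n → Fin d),
      P (x ∘ π) (y ∘ π) = P x y) :
    (P * Matrix.of (fun x y : Fin n → Fin d =>
        (∏ i ∈ Finset.univ.filter (fun i : Fin n => (i : ℕ) < k), ρA (x i) (y i)) *
        ∏ i ∈ Finset.univ.filter (fun i : Fin n => k ≤ (i : ℕ)), ρB (x i) (y i))).trace.re
      ≤ (n + 1) *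
        (P * Matrix.of (fun x y : Fin n → Fin d =>
          ∏ i : Fin n, (((k / n : ℝ) : ℂ) • ρA + ((1 - k / n : ℝ) : ℂ) • ρB)
            (x i) (y i))).trace.re := by
  classical
  set p : ℝ := (k : ℝ) / n with hpdef
  set q : ℝ := 1 - (k : ℝ) / n with hqdef
  have hn0 : (0:ℝ) < n := by exact_mod_cast hn
  have hkn : (k:ℝ) ≤ n := by exact_mod_cast hk
  have hp0 : 0 ≤ p := by positivity
  have hq0 : 0 ≤ q := by rw [hqdef, sub_nonneg, div_le_one hn0]; exact hkn
  -- the tensor-type matrices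
  set Q : Finset (Fin n) → Matrix (Fin n → Fin d) (Fin n → Fin d) ℂ :=
    fun S => Matrix.of fun x y : Fin n → Fin d =>
      ∏ i, (if i ∈ S then ρA else ρB) (x i) (y i) with hQdef
  have hQpsd : ∀ S, (Q S).PosSemidef := fun S => by
    apply tensor_posSemidef
    intro i; split <;> assumption
  have htr : ∀ S, 0 ≤ (P * Q S).trace.re :=
    fun S => (trace_mul_psd_nonneg hP (hQpsd S)).1
  set S₀ : Finset (Fin n) := Finset.univ.filter (fun i : Fin n => (i:ℕ) < k) with hS₀
  have hS₀card : S₀.card = k := by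
    have : S₀ = Finset.map ⟨Fin.castLE hk, Fin.castLE_injective hk⟩ Finset.univ := by
      ext i
      simp only [hS₀, Finset.mem_filter, Finset.mem_univ, true_and, Finset.mem_map,
        Function.Embedding.coeFn_mk]
      constructor
      · intro h; exact ⟨⟨(i:ℕ), h⟩, by ext; simp⟩
      · rintro ⟨j, rfl⟩; simpa using j.2
    rw [this, Finset.card_map, Finset.card_univ, Fintype.card_fin]
  have hQapply : ∀ (S : Finset (Fin n)) (x y : Fin n → Fin d),
      Q S x y = (∏ i ∈ S, ρA (x i) (y i)) * ∏ i ∈ Sᶜ, ρB (x i) (y i) := by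
    intro S x y
    simp only [hQdef, Matrix.of_apply]
    rw [← Finset.prod_mul_prod_compl S (fun i => (if i ∈ S then ρA else ρB) (x i) (y i))]
    congr 1
    · exact Finset.prod_congr rfl fun i hi => by rw [if_pos hi]
    · exact Finset.prod_congr rfl fun i hi => by rw [if_neg (Finset.mem_compl.mp hi)]
  -- identify the LHS matrix with Q S₀
  have hX : Matrix.of (fun x y : Fin n → Fin d =>
      (∏ i ∈ Finset.univ.filter (fun i : Fin n => (i : ℕ) < k), ρA (x i) (y i)) *
      ∏ i ∈ Finset.univ.filter (fun i : Fin n => k ≤ (i : ℕ)), ρB (x i) (y i)) = Q S₀ := by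
    ext x y
    rw [Matrix.of_apply, hQapply S₀ x y]
    congr 1
    congr 1
    rw [hS₀, Finset.compl_filter]
    exact Finset.filter_congr fun i _ => by simp [not_lt]
  -- expansion of the tensor power of ρC
  have hexp : Matrix.of (fun x y : Fin n → Fin d =>
        ∏ i : Fin n, (((p : ℝ) : ℂ) • ρA + ((q : ℝ) : ℂ) • ρB) (x i) (y i))
      = ∑ S ∈ Finset.univ.powerset,
          (((p ^ S.card * q ^ (n - S.card) : ℝ) : ℂ)) • Q S := by
    ext x y
    simp only [Matrix.sum_apply, Matrix.smul_apply, Matrix.of_apply, Matrix.add_apply,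
      smul_eq_mul]
    rw [Finset.prod_add]
    refine Finset.sum_congr rfl fun S hS => ?_
    rw [hQapply S x y, Finset.prod_mul_distrib, Finset.prod_mul_distrib,
      Finset.prod_const, Finset.prod_const]
    have h1 : Finset.univ \ S = Sᶜ := (Finset.compl_eq_univ_sdiff S).symm
    have h2 : (Sᶜ : Finset (Fin n)).card = n - S.card := by
      rw [Finset.card_compl, Fintype.card_fin]
    rw [h1, h2]
    push_cast
    ring
  rw [hX, hexp]
  -- trace linearity
  have htrace_exp : (P * ∑ S ∈ Finset.univ.powerset,
        (((p ^ S.card * q ^ (n - S.card) : ℝ) : ℂ)) • Q S).trace.re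
      = ∑ S ∈ Finset.univ.powerset,
          (p ^ S.card * q ^ (n - S.card)) * (P * Q S).trace.re := by
    rw [Matrix.mul_sum, Matrix.trace_sum, Complex.re_sum]
    refine Finset.sum_congr rfl fun S _ => ?_
    rw [Matrix.mul_smul, Matrix.trace_smul, smul_eq_mul, Complex.re_ofReal_mul]
  rw [htrace_exp]
  -- lower bound: restrict to sets of cardinality k
  have hsub : ∑ S ∈ Finset.powersetCard k (Finset.univ : Finset (Fin n)),
        (p ^ S.card * q ^ (n - S.card)) * (P * Q S).trace.re
      ≤ ∑ S ∈ Finset.univ.powerset,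
        (p ^ S.card * q ^ (n - S.card)) * (P * Q S).trace.re := by
    apply Finset.sum_le_sum_of_subset_of_nonneg
    · intro S hS
      rw [Finset.mem_powersetCard] at hS
      exact Finset.mem_powerset.mpr hS.1
    · intro S _ _
      exact mul_nonneg (by positivity) (htr S)
  have hconst : ∀ S ∈ Finset.powersetCard k (Finset.univ : Finset (Fin n)),
      (p ^ S.card * q ^ (n - S.card)) * (P * Q S).trace.re
      = (p ^ k * q ^ (n - k)) * (P * Q S₀).trace.re := by
    intro S hS
    rw [Finset.mem_powersetCard] at hS
    have hc : S.card = k := hS.2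
    have := trace_perm ρA ρB P hPinv S S₀ (by rw [hc, hS₀card])
    rw [hc, this]
  rw [Finset.sum_congr rfl hconst] at hsub
  rw [Finset.sum_const, Finset.card_powersetCard, Finset.card_univ, Fintype.card_fin,
    nsmul_eq_mul] at hsub
  have hkey := real_key hn hk
  set t₀ : ℝ := (P * Q S₀).trace.re with ht₀
  have ht₀0 : 0 ≤ t₀ := htr S₀
  calc t₀ = 1 * t₀ := (one_mul t₀).symm
    _ ≤ (((n : ℝ) + 1) * (n.choose k * (p ^ k * q ^ (n - k)))) * t₀ := by
        exact mul_le_mul_of_nonneg_right hkey ht₀0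
    _ = ((n : ℝ) + 1) * ((n.choose k : ℝ) * ((p ^ k * q ^ (n - k)) * t₀)) := by ring
    _ ≤ ((n : ℝ) + 1) * ∑ S ∈ Finset.univ.powerset,
          (p ^ S.card * q ^ (n - S.card)) * (P * Q S).trace.re := by
        apply mul_le_mul_of_nonneg_left _ (by positivity)
        exact hsub
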